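/- arXiv:2512.00222 — 3 statements merged into one kernel-verified Lean document; each statement's English description precedes it below -/
import Mathlib

section
/- Let Λ ∈ ℝ^{d×d} be symmetric positive definite, θ̂ ∈ ℝ^d with ‖θ̂‖₂ = 1, and β > 0. Let w⋆ be any maximizer of w ↦ ‖θ̂ + β Λ^{−1/2} w‖₂ over the unit sphere {w : ‖w‖₂ = 1} (a maximizer exists by compactness, and θ̂ + β Λ^{−1/2} w⋆ ≠ 0). Then a⋆ = (θ̂ + β Λ^{−1/2} w⋆)/‖θ̂ + β Λ^{−1/2} w⋆‖₂ is a maximizer of a ↦ ⟨a, θ̂⟩ + β √(aᵀ Λ^{−1} a) over the unit ball {a : ‖a‖₂ ≤ 1}, and the maximum value of this map over the unit ball equals ‖θ̂ + β Λ^{−1/2} w⋆‖₂. -/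
open Matrix

noncomputable section

/-- Euclidean norm of a vector in `ℝ^d`. -/
def vnorm {d : ℕ} (x : Fin d → ℝ) : ℝ := Real.sqrt (x ⬝ᵥ x)

/-- Projection onto the unit sphere, `x ↦ x / ‖x‖₂`. -/
def sphProj {d : ℕ} (x : Fin d → ℝ) : Fin d → ℝ := (vnorm x)⁻¹ • x

/-- `Λ^{-1/2}`: the inverse of the positive definite square root of `Λ`. -/
def posSemidefSqrt {d : ℕ} {M : Matrix (Fin d) (Fin d) ℝ} (hA : M.PosSemidef) :
    Matrix (Fin d) (Fin d) ℝ :=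
  hA.1.eigenvectorUnitary.1 * diagonal ((↑) ∘ (√·) ∘ hA.1.eigenvalues) *
    (star hA.1.eigenvectorUnitary : Matrix (Fin d) (Fin d) ℝ)

def invSqrt {d : ℕ} {M : Matrix (Fin d) (Fin d) ℝ} (hM : M.PosDef) :
    Matrix (Fin d) (Fin d) ℝ := (posSemidefSqrt hM.posSemidef)⁻¹

namespace UcbAux

variable {d : ℕ}

lemma psqrt_herm {M : Matrix (Fin d) (Fin d) ℝ} (hA : M.PosSemidef) :
    (posSemidefSqrt hA).IsHermitian := by
  rw [IsHermitian, posSemidefSqrt, conjTranspose_mul, conjTranspose_mul, diagonal_conjTranspose]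
  simp [mul_assoc, Matrix.star_eq_conjTranspose]

lemma psqrt_mul_self {M : Matrix (Fin d) (Fin d) ℝ} (hA : M.PosSemidef) :
    posSemidefSqrt hA * posSemidefSqrt hA = M := by
  conv_rhs => rw [hA.1.spectral_theorem]
  rw [posSemidefSqrt, Unitary.conjStarAlgAut_apply]
  have h1 : (star hA.1.eigenvectorUnitary : Matrix (Fin d) (Fin d) ℝ) * hA.1.eigenvectorUnitary.1 = 1 :=
    Unitary.coe_star_mul_self _
  have h2 : diagonal ((↑) ∘ (√·) ∘ hA.1.eigenvalues) * diagonal ((↑) ∘ (√·) ∘ hA.1.eigenvalues)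
      = diagonal (RCLike.ofReal ∘ hA.1.eigenvalues : Fin d → ℝ) := by
    rw [diagonal_mul_diagonal]
    congr 1; funext i
    simp [Real.mul_self_sqrt (hA.eigenvalues_nonneg i)]
  calc _ = hA.1.eigenvectorUnitary.1 * diagonal ((↑) ∘ (√·) ∘ hA.1.eigenvalues) *
      ((star hA.1.eigenvectorUnitary : Matrix (Fin d) (Fin d) ℝ) * hA.1.eigenvectorUnitary.1) *
      diagonal ((↑) ∘ (√·) ∘ hA.1.eigenvalues) * (star hA.1.eigenvectorUnitary : Matrix (Fin d) (Fin d) ℝ) := by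
        simp only [mul_assoc]
    _ = _ := by rw [h1, mul_one, mul_assoc _ (diagonal _) (diagonal _), h2]

lemma vnorm_eq_norm (x : Fin d → ℝ) :
    vnorm x = ‖(WithLp.equiv 2 (Fin d → ℝ)).symm x‖ := by
  rw [EuclideanSpace.norm_eq, vnorm, dotProduct]
  congr 1
  refine Finset.sum_congr rfl fun i _ => ?_
  rw [Real.norm_eq_abs, sq_abs, sq]; rfl

lemma dot_eq_inner (x y : Fin d → ℝ) :
    x ⬝ᵥ y = inner ℝ ((WithLp.equiv 2 (Fin d → ℝ)).symm x)
      ((WithLp.equiv 2 (Fin d → ℝ)).symm y) := by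
  rw [dotProduct, PiLp.inner_apply]
  refine Finset.sum_congr rfl fun i _ => ?_
  simp [mul_comm]

lemma dot_le (x y : Fin d → ℝ) : x ⬝ᵥ y ≤ vnorm x * vnorm y := by
  rw [dot_eq_inner, vnorm_eq_norm, vnorm_eq_norm]
  exact real_inner_le_norm _ _

lemma vnorm_nonneg (x : Fin d → ℝ) : 0 ≤ vnorm x := Real.sqrt_nonneg _

lemma vnorm_add_le (x y : Fin d → ℝ) : vnorm (x + y) ≤ vnorm x + vnorm y := by
  rw [vnorm_eq_norm, vnorm_eq_norm, vnorm_eq_norm]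
  exact norm_add_le _ _

lemma vnorm_smul (c : ℝ) (x : Fin d → ℝ) : vnorm (c • x) = |c| * vnorm x := by
  rw [vnorm_eq_norm, vnorm_eq_norm]
  simp [norm_smul]

lemma dot_self_nonneg (x : Fin d → ℝ) : 0 ≤ x ⬝ᵥ x := by
  rw [dot_eq_inner]; exact real_inner_self_nonneg

lemma vnorm_mul_self (x : Fin d → ℝ) : vnorm x * vnorm x = x ⬝ᵥ x :=
  Real.mul_self_sqrt (dot_self_nonneg x)

lemma dot_symm_mat {M : Matrix (Fin d) (Fin d) ℝ} (hM : M.IsHermitian)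
    (x y : Fin d → ℝ) : x ⬝ᵥ M.mulVec y = M.mulVec x ⬝ᵥ y := by
  have hMT : Mᵀ = M := by
    have := hM
    rwa [Matrix.IsHermitian, Matrix.conjTranspose_eq_transpose_of_trivial] at this
  rw [dotProduct_mulVec, ← mulVec_transpose, hMT]

end UcbAux

open UcbAux

/-- **Lemma (an equivalent representation of the LinUCB action).**
If `w⋆` maximizes `w ↦ ‖θ̂ + β Λ^{-1/2} w‖₂` over the unit sphere, then
`θ̂ + β Λ^{-1/2} w⋆ ≠ 0`, and its projection `a⋆` onto the unit sphere maximizes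
`a ↦ ⟨a, θ̂⟩ + β √(aᵀ Λ⁻¹ a)` over the unit ball; the maximum value equals
`‖θ̂ + β Λ^{-1/2} w⋆‖₂`. -/
theorem ucb_action_representation
    (d : ℕ) (hd : 1 ≤ d)
    (Lmat : Matrix (Fin d) (Fin d) ℝ) (hL : Lmat.PosDef)
    (θhat : Fin d → ℝ) (hθ : vnorm θhat = 1) (β : ℝ) (hβ : 0 < β)
    (wstar : Fin d → ℝ) (hw : vnorm wstar = 1)
    (hmax : ∀ w : Fin d → ℝ, vnorm w = 1 →
      vnorm (θhat + β • (invSqrt hL).mulVec w) ≤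
        vnorm (θhat + β • (invSqrt hL).mulVec wstar)) :
    (θhat + β • (invSqrt hL).mulVec wstar ≠ 0) ∧
    vnorm (sphProj (θhat + β • (invSqrt hL).mulVec wstar)) ≤ 1 ∧
    (∀ b : Fin d → ℝ, vnorm b ≤ 1 →
      b ⬝ᵥ θhat + β * Real.sqrt (b ⬝ᵥ (Lmat⁻¹).mulVec b) ≤
        sphProj (θhat + β • (invSqrt hL).mulVec wstar) ⬝ᵥ θhat +
          β * Real.sqrt (sphProj (θhat + β • (invSqrt hL).mulVec wstar) ⬝ᵥ
            (Lmat⁻¹).mulVec (sphProj (θhat + β • (invSqrt hL).mulVec wstar)))) ∧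
    (sphProj (θhat + β • (invSqrt hL).mulVec wstar) ⬝ᵥ θhat +
        β * Real.sqrt (sphProj (θhat + β • (invSqrt hL).mulVec wstar) ⬝ᵥ
          (Lmat⁻¹).mulVec (sphProj (θhat + β • (invSqrt hL).mulVec wstar))) =
      vnorm (θhat + β • (invSqrt hL).mulVec wstar)) := by
  set S := invSqrt hL with hS
  -- symmetry of S
  have hQher : (posSemidefSqrt hL.posSemidef).IsHermitian := psqrt_herm hL.posSemidef
  have hSher : S.IsHermitian := hQher.inv
  -- S * S = Lmat⁻¹
  have hSS : S * S = Lmat⁻¹ := by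
    rw [hS, invSqrt, ← Matrix.mul_inv_rev, psqrt_mul_self hL.posSemidef]
  -- quadratic form rewrite
  have hquad : ∀ b : Fin d → ℝ,
      Real.sqrt (b ⬝ᵥ (Lmat⁻¹).mulVec b) = vnorm (S.mulVec b) := by
    intro b
    rw [← hSS, ← Matrix.mulVec_mulVec, dot_symm_mat hSher, vnorm]
  set v := θhat + β • S.mulVec wstar with hv
  set N := vnorm v with hN
  -- N ≥ 1
  have hN1 : 1 ≤ N := by
    have hneg : vnorm (-wstar) = 1 := by
      have := vnorm_smul (-1 : ℝ) wstar
      simpa [hw] using this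
    have h2 := hmax (-wstar) hneg
    have key : vnorm (θhat + β • S.mulVec (-wstar)) + N ≥ 2 := by
      have : (θhat + β • S.mulVec (-wstar)) + v = (2 : ℝ) • θhat := by
        rw [hv]
        have : S.mulVec (-wstar) = -(S.mulVec wstar) := by
          simp [Matrix.mulVec_neg]
        rw [this]
        module
      have htri := vnorm_add_le (θhat + β • S.mulVec (-wstar)) v
      rw [this, vnorm_smul] at htri
      rw [hθ] at htri
      norm_num at htri
      linarith
    linarith
  have hNpos : 0 < N := by linarith
  have hvne : v ≠ 0 := by
    intro h
    rw [h] at hN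
    have : N = 0 := by rw [hN, vnorm]; simp
    linarith
  -- sphProj v has norm 1
  have hproj : sphProj v = N⁻¹ • v := by rw [sphProj, hN]
  have hprojnorm : vnorm (sphProj v) = 1 := by
    rw [hproj, vnorm_smul, abs_of_pos (by positivity), ← hN]
    field_simp
  -- general upper bound: for vnorm b ≤ 1, b ⬝ᵥ θhat + β * vnorm (S.mulVec b) ≤ N
  have hub : ∀ b : Fin d → ℝ, vnorm b ≤ 1 →
      b ⬝ᵥ θhat + β * vnorm (S.mulVec b) ≤ N := by
    intro b hb
    by_cases hSb : vnorm (S.mulVec b) = 0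
    · rw [hSb]
      have := dot_le b θhat
      rw [hθ, mul_one] at this
      nlinarith
    · have hSbpos : 0 < vnorm (S.mulVec b) :=
        lt_of_le_of_ne (vnorm_nonneg _) (Ne.symm hSb)
      have hbpos : 0 < vnorm b := by
        rcases lt_or_eq_of_le (vnorm_nonneg b) with h | h
        · exact h
        · exfalso
          have hb0 : b = 0 := by
            have h1 : b ⬝ᵥ b = 0 := by
              have := vnorm_mul_self b
              rw [← h] at this
              linarith
            rw [dot_eq_inner] at h1
            have := inner_self_eq_zero.mp h1
            have h2 : (WithLp.equiv 2 (Fin d → ℝ)).symm b = 0 := this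
            simpa using congrArg (WithLp.equiv 2 (Fin d → ℝ)) h2
          rw [hb0] at hSb
          apply hSb
          simp [Matrix.mulVec_zero, vnorm, dotProduct]
      -- unit vector bhat and w
      set t := vnorm b with ht
      set bhat := t⁻¹ • b with hbhat
      have hbhatnorm : vnorm bhat = 1 := by
        rw [hbhat, vnorm_smul, abs_of_pos (by positivity), ← ht]
        field_simp
      have hSbhat : S.mulVec bhat = t⁻¹ • S.mulVec b := by
        rw [hbhat, Matrix.mulVec_smul]
      have hSbhatnorm : vnorm (S.mulVec bhat) = t⁻¹ * vnorm (S.mulVec b) := by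
        rw [hSbhat, vnorm_smul, abs_of_pos (by positivity)]
      have hSbhatpos : 0 < vnorm (S.mulVec bhat) := by
        rw [hSbhatnorm]; positivity
      set w := (vnorm (S.mulVec bhat))⁻¹ • S.mulVec bhat with hwdef
      have hwnorm : vnorm w = 1 := by
        rw [hwdef, vnorm_smul, abs_of_pos (by positivity)]
        field_simp
      -- ⟨bhat, θhat + β • S w⟩ = ⟨bhat,θhat⟩ + β * vnorm (S bhat)
      have hkey : bhat ⬝ᵥ (θhat + β • S.mulVec w) =
          bhat ⬝ᵥ θhat + β * vnorm (S.mulVec bhat) := by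
        rw [dotProduct_add, dotProduct_smul]
        congr 1
        rw [smul_eq_mul]
        congr 1
        rw [hwdef, Matrix.mulVec_smul, dotProduct_smul, smul_eq_mul,
          dot_symm_mat hSher]
        rw [← vnorm_mul_self (S.mulVec bhat)]
        field_simp
      have hcs := dot_le bhat (θhat + β • S.mulVec w)
      rw [hbhatnorm, one_mul] at hcs
      have hmaxw := hmax w hwnorm
      have hXle : bhat ⬝ᵥ θhat + β * vnorm (S.mulVec bhat) ≤ N := by
        rw [← hkey]
        exact le_trans hcs hmaxw
      -- scale back
      have hscale : b ⬝ᵥ θhat + β * vnorm (S.mulVec b) =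
          t * (bhat ⬝ᵥ θhat + β * vnorm (S.mulVec bhat)) := by
        rw [hbhat, smul_dotProduct, smul_eq_mul, hSbhatnorm]
        field_simp
      rw [hscale]
      have ht1 : t ≤ 1 := hb
      nlinarith [hXle, hNpos, hbpos]
  -- lower bound at sphProj v
  have hvk : v ⬝ᵥ v = v ⬝ᵥ θhat + β * (S.mulVec v ⬝ᵥ wstar) := by
    nth_rewrite 2 [hv]
    rw [dotProduct_add, dotProduct_smul, smul_eq_mul, dot_symm_mat hSher]
  have hcsw : S.mulVec v ⬝ᵥ wstar ≤ vnorm (S.mulVec v) := by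
    have := dot_le (S.mulVec v) wstar
    rwa [hw, mul_one] at this
  have hlower : N * N ≤ v ⬝ᵥ θhat + β * vnorm (S.mulVec v) := by
    rw [vnorm_mul_self v] at *
    nlinarith [hvk, hcsw, hβ.le]
  -- value at sphProj v
  have hval : sphProj v ⬝ᵥ θhat + β * vnorm (S.mulVec (sphProj v)) =
      N⁻¹ * (v ⬝ᵥ θhat + β * vnorm (S.mulVec v)) := by
    rw [hproj, smul_dotProduct, Matrix.mulVec_smul, vnorm_smul,
      abs_of_pos (by positivity), smul_eq_mul]
    ring
  have hge : N ≤ sphProj v ⬝ᵥ θhat + β * vnorm (S.mulVec (sphProj v)) := by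
    rw [hval, ← sub_nonneg]
    have heq2 : N⁻¹ * (v ⬝ᵥ θhat + β * vnorm (S.mulVec v)) - N =
        N⁻¹ * ((v ⬝ᵥ θhat + β * vnorm (S.mulVec v)) - N * N) := by
      field_simp
    rw [heq2]
    exact mul_nonneg (inv_nonneg.mpr hNpos.le) (by linarith)
  have hle : sphProj v ⬝ᵥ θhat + β * vnorm (S.mulVec (sphProj v)) ≤ N :=
    hub (sphProj v) (le_of_eq hprojnorm)
  have heq : sphProj v ⬝ᵥ θhat + β * vnorm (S.mulVec (sphProj v)) = N :=
    le_antisymm hle hge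
  refine ⟨hvne, le_of_eq hprojnorm, ?_, ?_⟩
  · intro b hb
    rw [hquad b, hquad (sphProj v), heq]
    exact hub b hb
  · rw [hquad (sphProj v), heq]

end
end

section
/- Fix d ≥ 1, β > 0, c₀ > 0, positive reals λ₁, …, λ_d and ν ∈ ℝ^d. Define g(w) = Σ_{i=1}^d (ν_i + β w_i/√λ_i)², let w⋆ be any maximizer of g over the sphere {w : ‖w‖₂ = c₀}, and set κ_i⋆ = (ν_i + β w_i⋆/√λ_i)/√(g(w⋆)). Suppose max_{1 ≤ i ≤ d} β²/λ_i ≥ (c/c₀) ‖ν‖₂² for some c ∈ (0,1]. Then there exist constants c₁ > 1 and C > 0, depending only on c and c₀, such that with L = {i : λ_i ≤ c₁ · min_{1 ≤ j ≤ d} λ_j}, one has Σ_{i∈L} (κ_i⋆)² ≥ C c₀². -/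
open Matrix Finset

open scoped Classical

noncomputable section

/-- The objective `g(w) = Σ_i (ν_i + β w_i/√λ_i)²`. -/
def gObj {d : ℕ} (β : ℝ) (ν lam : Fin d → ℝ) (w : Fin d → ℝ) : ℝ :=
  ∑ i, (ν i + β * w i / Real.sqrt (lam i))^2

set_option maxHeartbeats 1000000 in
/-- **Lemma (spectral concentration of the constrained maximizer).**
If `max_i β²/λ_i ≥ (c/c₀)‖ν‖₂²`, then any maximizer `w⋆` of `g` over the sphere of
radius `c₀` puts mass at least `C c₀²` (in the normalized coordinates `κ⋆`) on the
index set `L = {i : λ_i ≤ c₁ min_j λ_j}`, for constants `c₁ > 1` and `C > 0`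
depending only on `c` and `c₀`. -/
theorem maximizer_mass_on_small_eigenvalues
    (c c₀ : ℝ) (hc : c ∈ Set.Ioc (0:ℝ) 1) (hc₀ : 0 < c₀) :
    ∃ c₁ C : ℝ, 1 < c₁ ∧ 0 < C ∧
      ∀ (d : ℕ), 1 ≤ d →
      ∀ (β : ℝ), 0 < β →
      ∀ (lam : Fin d → ℝ), (∀ i, 0 < lam i) →
      ∀ (ν : Fin d → ℝ),
        (∃ i, (c / c₀) * (ν ⬝ᵥ ν) ≤ β^2 / lam i) →
      ∀ (wstar : Fin d → ℝ), vnorm wstar = c₀ →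
        (∀ w : Fin d → ℝ, vnorm w = c₀ → gObj β ν lam w ≤ gObj β ν lam wstar) →
        C * c₀^2 ≤
          ∑ i ∈ Finset.univ.filter (fun i => ∀ j, lam i ≤ c₁ * lam j),
            ((ν i + β * wstar i / Real.sqrt (lam i)) / Real.sqrt (gObj β ν lam wstar))^2 := by
  obtain ⟨hcpos, hcle⟩ := hc
  set R2 : ℝ := 1 / (c * c₀) with hR2def
  have hR2pos : 0 < R2 := by positivity
  set R : ℝ := Real.sqrt R2 with hRdef
  have hRnn : 0 ≤ R := Real.sqrt_nonneg _
  have hRsq : R ^ 2 = R2 := Real.sq_sqrt hR2pos.le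
  set c₁ : ℝ := 64 * (R + 1) ^ 2 with hc₁def
  set C : ℝ := 1 / (2 * c₀ ^ 2 * (R2 + 1)) with hCdef
  set ε : ℝ := 1 / (8 * (R + 1)) with hεdef
  have hεpos : 0 < ε := by positivity
  have hε : ε * (8 * (R + 1)) = 1 := by
    rw [hεdef]; field_simp
  have hε2 : ε ^ 2 * c₁ = 1 := by
    rw [hεdef, hc₁def]; field_simp; ring
  set h : ℝ := 1 / (2 * (R2 + 1)) with hhdef
  have hhpos : 0 < h := by positivity
  have hh : h * (2 * (R2 + 1)) = 1 := by
    rw [hhdef]; field_simp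
  have hc₁gt : 1 < c₁ := by
    rw [hc₁def]
    have hR1 : (1:ℝ) ≤ (R + 1) ^ 2 := by
      have h1 : (1:ℝ) ≤ R + 1 := by linarith
      calc (1:ℝ) = 1 * 1 := by ring
        _ ≤ (R + 1) * (R + 1) := mul_le_mul h1 h1 (by norm_num) (by linarith)
        _ = (R + 1) ^ 2 := by ring
    linarith
  have hCpos : 0 < C := by rw [hCdef]; positivity
  have hCc : C * c₀ ^ 2 = h := by
    rw [hCdef, hhdef]; field_simp
  clear_value R2 R c₁ C ε h
  have hc₁pos : 0 < c₁ := lt_trans one_pos hc₁gt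
  refine ⟨c₁, C, hc₁gt, hCpos, ?_⟩
  intro d hd β hβ lam hlam ν hhyp wstar hwnorm hmax
  -- minimal eigenvalue index
  obtain ⟨i₀, -, hmin⟩ := Finset.exists_min_image Finset.univ lam ⟨⟨0, hd⟩, Finset.mem_univ _⟩
  have hmin' : ∀ j, lam i₀ ≤ lam j := fun j => hmin j (Finset.mem_univ j)
  have hsqrtlam : ∀ i, 0 < Real.sqrt (lam i) := fun i => Real.sqrt_pos.2 (hlam i)
  set a : Fin d → ℝ := fun i => β / Real.sqrt (lam i) with hadef
  have hapos : ∀ i, 0 < a i := fun i => div_pos hβ (hsqrtlam i)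
  have hasq : ∀ i, (a i) ^ 2 = β ^ 2 / lam i := by
    intro i
    rw [hadef]
    exact (div_pow β _ 2).trans (by rw [Real.sq_sqrt (hlam i).le])
  have haval : ∀ i x, β * x / Real.sqrt (lam i) = a i * x := by
    intro i x; rw [hadef]; ring
  clear_value a
  set u2 : ℝ := ν ⬝ᵥ ν with hu2def
  have hu2eq : u2 = ∑ i, (ν i) ^ 2 := by
    rw [hu2def]; simp [dotProduct, sq]
  have hu2nn : 0 ≤ u2 := by rw [hu2eq]; positivity
  clear_value u2
  set A : ℝ := a i₀ * c₀ with hAdef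
  have hApos : 0 < A := mul_pos (hapos i₀) hc₀
  clear_value A
  -- hypothesis gives u2 ≤ R2 * A^2
  have hu2le : u2 ≤ R2 * A ^ 2 := by
    obtain ⟨i, hi⟩ := hhyp
    have h1 : β ^ 2 / lam i ≤ β ^ 2 / lam i₀ :=
      div_le_div_of_nonneg_left (by positivity) (hlam i₀) (hmin' i)
    have h2 : (c / c₀) * u2 ≤ β ^ 2 / lam i₀ := le_trans hi h1
    have h3 : R2 * A ^ 2 = (c₀ / c) * (β ^ 2 / lam i₀) := by
      rw [hAdef, mul_pow, hasq i₀, hR2def]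
      field_simp [hcpos.ne', hc₀.ne', (hlam i₀).ne']
    calc u2 = (c₀ / c) * ((c / c₀) * u2) := by field_simp
      _ ≤ (c₀ / c) * (β ^ 2 / lam i₀) :=
          mul_le_mul_of_nonneg_left h2 (by positivity)
      _ = R2 * A ^ 2 := h3.symm
  -- lower bound on G via test vector
  set G : ℝ := gObj β ν lam wstar with hGdef
  clear_value G
  have hGge : u2 + A ^ 2 ≤ G := by
    have hsex : ∃ s : ℝ, s ^ 2 = c₀ ^ 2 ∧ 0 ≤ ν i₀ * s := by
      rcases le_or_gt 0 (ν i₀) with hn | hn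
      · exact ⟨c₀, by ring, mul_nonneg hn hc₀.le⟩
      · refine ⟨-c₀, by ring, ?_⟩
        have h0 : 0 ≤ (-ν i₀) * c₀ := mul_nonneg (by linarith) hc₀.le
        calc (0:ℝ) ≤ (-ν i₀) * c₀ := h0
          _ = ν i₀ * (-c₀) := by ring
    obtain ⟨s, hs2, hsν⟩ := hsex
    set w : Fin d → ℝ := fun j => if j = i₀ then s else 0 with hwdef
    have hwval : ∀ j, w j = if j = i₀ then s else 0 := fun j => by rw [hwdef]
    clear_value w
    have hwn : vnorm w = c₀ := by
      have hd2 : w ⬝ᵥ w = c₀ ^ 2 := by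
        simp only [dotProduct]
        rw [Finset.sum_eq_single i₀]
        · rw [hwval i₀, if_pos rfl, ← sq, hs2]
        · intro b _ hb; rw [hwval b, if_neg hb, mul_zero]
        · intro hb; exact absurd (Finset.mem_univ i₀) hb
      rw [vnorm, hd2, Real.sqrt_sq hc₀.le]
    have key : ∀ j ∈ Finset.univ (α := Fin d),
        (ν j) ^ 2 + (if j = i₀ then A ^ 2 else 0)
          ≤ (ν j + β * w j / Real.sqrt (lam j)) ^ 2 := by
      intro j _
      rw [hwval j]
      by_cases hj : j = i₀
      · subst hj
        rw [if_pos rfl, if_pos rfl, haval]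
        have hAs : (a j * s) ^ 2 = A ^ 2 := by
          rw [mul_pow, hs2, hAdef, mul_pow]
        have hsa : 0 ≤ ν j * (a j * s) := by
          have h0 := mul_nonneg (hapos j).le hsν
          calc (0:ℝ) ≤ a j * (ν j * s) := h0
            _ = ν j * (a j * s) := by ring
        have hexp : (ν j + a j * s) ^ 2
            = ν j ^ 2 + 2 * (ν j * (a j * s)) + A ^ 2 := by
          rw [← hAs]; ring
        rw [hexp]
        linarith [hsa]
      · rw [if_neg hj, if_neg hj, mul_zero, zero_div]; simp
    have hsum : ∑ j, ((ν j) ^ 2 + (if j = i₀ then A ^ 2 else 0)) = u2 + A ^ 2 := by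
      rw [Finset.sum_add_distrib, Finset.sum_ite_eq' Finset.univ i₀ (fun _ => A ^ 2)]
      simp [hu2eq]
    have hgw : u2 + A ^ 2 ≤ gObj β ν lam w := by
      rw [← hsum]
      exact Finset.sum_le_sum key
    exact le_trans hgw (hmax w hwn)
  have hGpos : 0 < G := lt_of_lt_of_le (by positivity) hGge
  -- norm of wstar
  have hwsq : ∑ i, (wstar i) ^ 2 = c₀ ^ 2 := by
    have h0 : wstar ⬝ᵥ wstar = ∑ i, (wstar i) ^ 2 := by
      simp [dotProduct, sq]
    have h1 : 0 ≤ wstar ⬝ᵥ wstar := by rw [h0]; positivity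
    have h2 : Real.sqrt (wstar ⬝ᵥ wstar) = c₀ := hwnorm
    have h3 : wstar ⬝ᵥ wstar = c₀ ^ 2 := by
      rw [← Real.sq_sqrt h1, h2]
    rw [← h0, h3]
  -- G as a sum of squares
  have hGsum : G = ∑ i, (ν i + a i * wstar i) ^ 2 := by
    rw [hGdef, gObj]
    exact Finset.sum_congr rfl fun i _ => by rw [haval]
  have hterm : ∀ i, ((ν i + β * wstar i / Real.sqrt (lam i)) / Real.sqrt G) ^ 2
      = (ν i + a i * wstar i) ^ 2 / G := by
    intro i
    rw [haval, div_pow, Real.sq_sqrt hGpos.le]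
  set T := Finset.univ.filter (fun i => ∀ j, lam i ≤ c₁ * lam j) with hTdef
  set S := Finset.univ.filter (fun i => ¬ ∀ j, lam i ≤ c₁ * lam j) with hSdef
  have hsplit : ∑ i ∈ T, (ν i + a i * wstar i) ^ 2 + ∑ i ∈ S, (ν i + a i * wstar i) ^ 2
      = ∑ i, (ν i + a i * wstar i) ^ 2 := by
    rw [hTdef, hSdef]
    exact Finset.sum_filter_add_sum_filter_not _ _ _
  -- U = sqrt u2
  set U := Real.sqrt u2 with hUdef
  have hUnn : 0 ≤ U := Real.sqrt_nonneg _
  have hU2 : U ^ 2 = u2 := Real.sq_sqrt hu2nn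
  have hUle : U ≤ R * A := by
    calc U ≤ Real.sqrt (R2 * A ^ 2) := Real.sqrt_le_sqrt hu2le
      _ = R * A := by
          rw [Real.sqrt_mul hR2pos.le, Real.sqrt_sq hApos.le, hRdef]
  clear_value U
  -- bounds on S-sums
  have hSν : ∑ i ∈ S, (ν i) ^ 2 ≤ u2 := by
    rw [hu2eq]
    exact Finset.sum_le_sum_of_subset_of_nonneg (Finset.filter_subset _ _)
      (fun i _ _ => by positivity)
  have hε2' : ε ^ 2 = 1 / c₁ := by
    rw [eq_div_iff hc₁pos.ne']; exact hε2
  have hSt : ∑ i ∈ S, (a i * wstar i) ^ 2 ≤ (A * ε) ^ 2 := by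
    have hai : ∀ i ∈ S, (a i) ^ 2 ≤ A ^ 2 * ε ^ 2 / c₀ ^ 2 := by
      intro i hiS
      have hiP : ¬ (∀ j, lam i ≤ c₁ * lam j) := by
        have := Finset.mem_filter.1 (hSdef ▸ hiS)
        exact this.2
      push_neg at hiP
      obtain ⟨j, hji⟩ := hiP
      have h4 : c₁ * lam i₀ ≤ c₁ * lam j := mul_le_mul_of_nonneg_left (hmin' j) hc₁pos.le
      have h5 : c₁ * lam i₀ < lam i := lt_of_le_of_lt h4 hji
      have h6 : (a i) ^ 2 ≤ β ^ 2 / (c₁ * lam i₀) := by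
        rw [hasq i]
        exact div_le_div_of_nonneg_left (by positivity) (mul_pos hc₁pos (hlam i₀)) h5.le
      have h7 : β ^ 2 / (c₁ * lam i₀) = A ^ 2 * ε ^ 2 / c₀ ^ 2 := by
        rw [hAdef, mul_pow, hasq i₀, hε2']
        field_simp [hc₁pos.ne', (hlam i₀).ne', hc₀.ne']
      linarith [h6, h7.le]
    calc ∑ i ∈ S, (a i * wstar i) ^ 2
        ≤ ∑ i ∈ S, (A ^ 2 * ε ^ 2 / c₀ ^ 2) * (wstar i) ^ 2 := by
          refine Finset.sum_le_sum fun i hi => ?_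
          rw [mul_pow]
          exact mul_le_mul_of_nonneg_right (hai i hi) (by positivity)
      _ = (A ^ 2 * ε ^ 2 / c₀ ^ 2) * ∑ i ∈ S, (wstar i) ^ 2 := by
          rw [Finset.mul_sum]
      _ ≤ (A ^ 2 * ε ^ 2 / c₀ ^ 2) * c₀ ^ 2 := by
          refine mul_le_mul_of_nonneg_left ?_ (by positivity)
          rw [← hwsq]
          exact Finset.sum_le_sum_of_subset_of_nonneg (Finset.filter_subset _ _)
            (fun i _ _ => by positivity)
      _ = (A * ε) ^ 2 := by
          field_simp
  have hCS : ∑ i ∈ S, ν i * (a i * wstar i) ≤ U * (A * ε) := by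
    calc ∑ i ∈ S, ν i * (a i * wstar i)
        ≤ Real.sqrt (∑ i ∈ S, (ν i) ^ 2) * Real.sqrt (∑ i ∈ S, (a i * wstar i) ^ 2) :=
          Real.sum_mul_le_sqrt_mul_sqrt S _ _
      _ ≤ U * (A * ε) := by
          apply mul_le_mul
          · rw [hUdef]; exact Real.sqrt_le_sqrt hSν
          · calc Real.sqrt (∑ i ∈ S, (a i * wstar i) ^ 2)
                ≤ Real.sqrt ((A * ε) ^ 2) := Real.sqrt_le_sqrt hSt
              _ = A * ε := Real.sqrt_sq (by positivity)
          · exact Real.sqrt_nonneg _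
          · exact hUnn
  -- numeric facts
  have h8 : 8 * (R * ε) + 8 * ε = 1 := by linear_combination hε
  have hRεnn : 0 ≤ R * ε := mul_nonneg hRnn hεpos.le
  have hRε : R * ε ≤ 1 / 8 := by linarith
  have hεle : ε ≤ 1 / 8 := by linarith
  have hhlt : h ≤ 1 / 2 := by
    have h9 : 2 * (h * R2) + 2 * h = 1 := by linear_combination hh
    have h10 : 0 ≤ h * R2 := mul_nonneg hhpos.le hR2pos.le
    linarith
  have e1 : U * (A * ε) ≤ A ^ 2 * (1 / 8) := by
    calc U * (A * ε) ≤ (R * A) * (A * ε) :=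
          mul_le_mul_of_nonneg_right hUle (by positivity)
      _ = A ^ 2 * (R * ε) := by ring
      _ ≤ A ^ 2 * (1 / 8) := mul_le_mul_of_nonneg_left hRε (by positivity)
  have hε2le : ε ^ 2 ≤ 1 / 64 := by
    calc ε ^ 2 = ε * ε := sq ε
      _ ≤ (1/8) * (1/8) := mul_le_mul hεle hεle hεpos.le (by norm_num)
      _ = 1 / 64 := by norm_num
  have e2 : (A * ε) ^ 2 ≤ A ^ 2 * (1 / 64) := by
    calc (A * ε) ^ 2 = A ^ 2 * ε ^ 2 := by ring
      _ ≤ A ^ 2 * (1 / 64) := mul_le_mul_of_nonneg_left hε2le (by positivity)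
  have e3 : U ^ 2 ≤ R2 * A ^ 2 := by rw [hU2]; exact hu2le
  have e4 : h * (U ^ 2 + A ^ 2) ≤ A ^ 2 * (1 / 2) := by
    have e4a : h * (U ^ 2 + A ^ 2) ≤ h * (R2 * A ^ 2 + A ^ 2) :=
      mul_le_mul_of_nonneg_left (by linarith [e3]) hhpos.le
    have e4b : h * (R2 * A ^ 2 + A ^ 2) = A ^ 2 * (1 / 2) := by
      linear_combination (A ^ 2 / 2) * hh
    linarith
  -- main bound on S-sum
  have hSsum : ∑ i ∈ S, (ν i + a i * wstar i) ^ 2 ≤ (1 - h) * G := by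
    have hexp : ∑ i ∈ S, (ν i + a i * wstar i) ^ 2
        = ∑ i ∈ S, (ν i) ^ 2 + 2 * ∑ i ∈ S, ν i * (a i * wstar i)
          + ∑ i ∈ S, (a i * wstar i) ^ 2 := by
      rw [Finset.mul_sum, ← Finset.sum_add_distrib, ← Finset.sum_add_distrib]
      exact Finset.sum_congr rfl fun i _ => by ring
    have step1 : ∑ i ∈ S, (ν i + a i * wstar i) ^ 2
        ≤ U ^ 2 + 2 * (U * (A * ε)) + (A * ε) ^ 2 := by
      rw [hexp, hU2]
      linarith [hSν, hSt, hCS]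
    have step2 : U ^ 2 + 2 * (U * (A * ε)) + (A * ε) ^ 2 ≤ (1 - h) * (U ^ 2 + A ^ 2) := by
      have hring : (1 - h) * (U ^ 2 + A ^ 2) = U ^ 2 + A ^ 2 - h * (U ^ 2 + A ^ 2) := by ring
      linarith [e1, e2, e4, sq_nonneg A]
    have step3 : (1 - h) * (U ^ 2 + A ^ 2) ≤ (1 - h) * G := by
      refine mul_le_mul_of_nonneg_left ?_ (by linarith)
      rw [hU2]; exact hGge
    linarith
  -- conclusion
  rw [hCc]
  have hrw : ∑ i ∈ T, ((ν i + β * wstar i / Real.sqrt (lam i)) / Real.sqrt G) ^ 2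
      = (∑ i ∈ T, (ν i + a i * wstar i) ^ 2) / G := by
    rw [Finset.sum_div]
    exact Finset.sum_congr rfl fun i _ => hterm i
  rw [hrw, le_div_iff₀ hGpos]
  have hTeq : ∑ i ∈ T, (ν i + a i * wstar i) ^ 2
      = G - ∑ i ∈ S, (ν i + a i * wstar i) ^ 2 := by
    rw [hGsum]; linarith [hsplit]
  have hring2 : (1 - h) * G = G - h * G := by ring
  linarith [hSsum, hTeq.le, hTeq.ge]


end
end

section
/- Fix d ≥ 1, β > 0, c₀ > 0 and positive reals λ₁, …, λ_d with λ₁ ≥ λ_i for all i. Let ν ∈ ℝ^d with ‖ν‖₂ = c₀, let w⋆ be any maximizer of w ↦ Σ_{i=1}^d (ν_i + β w_i/√λ_i)² over the sphere {w : ‖w‖₂ = c₀}, and let w̃⋆ be any maximizer of w ↦ (c₀ + β w₁/√λ₁)² + Σ_{i=2}^d β² w_i²/λ_i over the same sphere (the canonical problem with signal c₀·e₁). Then the first coordinates satisfy |w⋆₁| ≤ |w̃⋆₁|. -/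
open Matrix Finset

noncomputable section

set_option maxHeartbeats 1000000

lemma sum_split_pair {d : ℕ} (F : Fin d → ℝ) {z j : Fin d} (hzj : z ≠ j) :
    ∑ i, F i = F z + F j + ∑ i ∈ Finset.univ \ {z, j}, F i := by
  rw [← Finset.sum_sdiff (Finset.subset_univ ({z, j} : Finset (Fin d))), Finset.sum_pair hzj]
  ring

lemma sum_upd2 {d : ℕ} (F : Fin d → ℝ → ℝ) (w : Fin d → ℝ) {z j : Fin d} (hzj : z ≠ j)
    (x y : ℝ) :
    ∑ i, F i (Function.update (Function.update w z x) j y i)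
      = ∑ i, F i (w i) - F z (w z) - F j (w j) + F z x + F j y := by
  classical
  set u := Function.update (Function.update w z x) j y with hu
  have huz : u z = x := by
    rw [hu, Function.update_of_ne hzj, Function.update_self]
  have huj : u j = y := by rw [hu, Function.update_self]
  have hrest : ∑ i ∈ Finset.univ \ {z, j}, F i (u i)
      = ∑ i ∈ Finset.univ \ {z, j}, F i (w i) := by
    apply Finset.sum_congr rfl
    intro i hi
    simp only [Finset.mem_sdiff, Finset.mem_insert, Finset.mem_singleton] at hi
    push_neg at hi
    rw [hu, Function.update_of_ne hi.2.2, Function.update_of_ne hi.2.1]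
  rw [sum_split_pair (fun i => F i (u i)) hzj, sum_split_pair (fun i => F i (w i)) hzj,
    huz, huj, hrest]
  ring

lemma abs_le_of_sq_le' {x c : ℝ} (hc : 0 ≤ c) (h : x^2 ≤ c^2) : |x| ≤ c := by
  nlinarith [abs_nonneg x, sq_abs x]

lemma gen_ub {d : ℕ} (a : Fin d → ℝ) (ha : ∀ i, 0 < a i) (z j : Fin d)
    (hzj : a z < a j) (c₀ : ℝ) (hc₀ : 0 < c₀)
    (ν : Fin d → ℝ) (hν : ∑ i, (ν i)^2 = c₀^2)
    (w : Fin d → ℝ) (hw : ∑ i, (w i)^2 = c₀^2)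
    (hmax : ∀ v : Fin d → ℝ, (∑ i, (v i)^2 = c₀^2) →
      ∑ i, (ν i + a i * v i)^2 ≤ ∑ i, (ν i + a i * w i)^2) :
    ((a j)^2 - (a z)^2) * |w z| ≤ a z * c₀ := by
  by_contra hcon
  push_neg at hcon
  have haz := ha z
  have haj := ha j
  have hne : z ≠ j := by rintro rfl; exact lt_irrefl _ hzj
  have hD : 0 < (a j)^2 - (a z)^2 := by nlinarith only [haz, haj, hzj]
  set T := a z * c₀ / ((a j)^2 - (a z)^2) with hTdef
  have hT : ((a j)^2 - (a z)^2) * T = a z * c₀ := by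
    rw [hTdef]; field_simp
  have hTpos : 0 < T := div_pos (mul_pos haz hc₀) hD
  set X := |w z| with hX
  have hXT : T < X := by
    rw [← hT] at hcon
    exact lt_of_mul_lt_mul_left hcon hD.le
  have hX0 : 0 < X := lt_trans hTpos hXT
  set p := (X + T)/2 with hp
  have hpX : p < X := by rw [hp]; linarith only [hXT]
  have hp0 : 0 < p := by rw [hp]; linarith only [hX0, hTpos]
  have hXp : 0 ≤ X - p := sub_nonneg.mpr hpX.le
  set σ : ℝ := if 0 ≤ w z then 1 else -1 with hσ
  have hwzX : w z = σ * X := by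
    rcases le_or_gt 0 (w z) with h | h
    · rw [hσ, if_pos h, hX, abs_of_nonneg h, one_mul]
    · rw [hσ, if_neg (not_le.mpr h), hX, abs_of_neg h]; ring
  have hσ2 : σ^2 = 1 := by
    rcases le_or_gt 0 (w z) with h | h
    · rw [hσ, if_pos h]; norm_num
    · rw [hσ, if_neg (not_le.mpr h)]; norm_num
  have hσabs : |σ| = 1 := by
    rcases le_or_gt 0 (w z) with h | h
    · rw [hσ, if_pos h]; norm_num
    · rw [hσ, if_neg (not_le.mpr h)]; norm_num
  set x' : ℝ := σ * p with hx'
  have hx'2 : x'^2 = p^2 := by rw [hx', mul_pow, hσ2, one_mul]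
  have hwz2 : (w z)^2 = X^2 := (sq_abs (w z)).symm
  have hp2X : p^2 < X^2 := by nlinarith only [hpX, hp0, hX0]
  have hsub : 0 ≤ (w z)^2 - p^2 := by rw [hwz2]; exact sub_nonneg.mpr hp2X.le
  have hrad : 0 ≤ (w j)^2 + ((w z)^2 - p^2) := add_nonneg (sq_nonneg _) hsub
  set q := Real.sqrt ((w j)^2 + ((w z)^2 - p^2)) with hq
  have hq2 : q^2 = (w j)^2 + ((w z)^2 - p^2) := Real.sq_sqrt hrad
  have hq0 : 0 ≤ q := Real.sqrt_nonneg _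
  have hqy : |w j| ≤ q := by
    rw [hq, ← Real.sqrt_sq_eq_abs]
    exact Real.sqrt_le_sqrt (le_add_of_nonneg_right hsub)
  set s : ℝ := if 0 ≤ ν j then 1 else -1 with hs
  have hsν : ν j * s = |ν j| := by
    rcases le_or_gt 0 (ν j) with h | h
    · rw [hs, if_pos h, abs_of_nonneg h, mul_one]
    · rw [hs, if_neg (not_le.mpr h), abs_of_neg h]; ring
  have hs2 : s^2 = 1 := by
    rcases le_or_gt 0 (ν j) with h | h
    · rw [hs, if_pos h]; norm_num
    · rw [hs, if_neg (not_le.mpr h)]; norm_num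
  set y' : ℝ := s * q with hy'
  have hy'2 : y'^2 = q^2 := by rw [hy', mul_pow, hs2, one_mul]
  -- bounds (independent of the optimality inequality)
  have hνz : |ν z| ≤ c₀ := by
    refine abs_le_of_sq_le' hc₀.le ?_
    rw [← hν]
    exact Finset.single_le_sum (f := fun i => (ν i)^2) (fun i _ => sq_nonneg _)
      (Finset.mem_univ z)
  have hb : -(c₀ * (X - p)) ≤ ν z * (x' - w z) := by
    have h2 : x' - w z = σ * (p - X) := by rw [hx', hwzX]; ring
    have h1 : |ν z * (x' - w z)| = |ν z| * (X - p) := by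
      rw [h2, abs_mul, abs_mul, hσabs, one_mul, abs_of_nonpos (sub_nonpos.mpr hpX.le)]
      ring
    have h9 := neg_abs_le (ν z * (x' - w z))
    rw [h1] at h9
    have h10 : |ν z| * (X - p) ≤ c₀ * (X - p) := mul_le_mul_of_nonneg_right hνz hXp
    exact le_trans (neg_le_neg h10) h9
  have hc2 : ν j * w j ≤ ν j * y' := by
    have h3 : ν j * y' = |ν j| * q := by rw [hy', ← hsν]; ring
    calc ν j * w j ≤ |ν j * w j| := le_abs_self _
      _ = |ν j| * |w j| := abs_mul _ _
      _ ≤ |ν j| * q := mul_le_mul_of_nonneg_left hqy (abs_nonneg _)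
      _ = ν j * y' := h3.symm
  have hbig : 2 * (a z) * c₀ < ((a j)^2 - (a z)^2) * (X + p) := by
    have h4 : 2 * T < X + p := by rw [hp]; linarith only [hXT]
    calc 2 * (a z) * c₀ = ((a j)^2 - (a z)^2) * (2 * T) := by linear_combination 2 * hT.symm
      _ < ((a j)^2 - (a z)^2) * (X + p) := mul_lt_mul_of_pos_left h4 hD
  have hprod : 0 < (X - p) * (((a j)^2 - (a z)^2) * (X + p) - 2 * a z * c₀) :=
    mul_pos (by linarith only [hpX]) (by linarith only [hbig])
  -- the perturbed vector
  have hvsum : ∑ i, ((Function.update (Function.update w z x') j y') i)^2 = c₀^2 := by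
    calc ∑ i, ((Function.update (Function.update w z x') j y') i)^2
        = (∑ i, (w i)^2) - (w z)^2 - (w j)^2 + x'^2 + y'^2 :=
          sum_upd2 (fun _ t => t^2) w hne x' y'
      _ = c₀^2 := by rw [hw, hx'2, hy'2, hq2]; ring
  have hle : (∑ i, (ν i + a i * w i)^2) - (ν z + a z * w z)^2 - (ν j + a j * w j)^2
      + (ν z + a z * x')^2 + (ν j + a j * y')^2 ≤ ∑ i, (ν i + a i * w i)^2 := by
    calc (∑ i, (ν i + a i * w i)^2) - (ν z + a z * w z)^2 - (ν j + a j * w j)^2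
          + (ν z + a z * x')^2 + (ν j + a j * y')^2
        = ∑ i, (ν i + a i * (Function.update (Function.update w z x') j y' i))^2 :=
          (sum_upd2 (fun i t => (ν i + a i * t)^2) w hne x' y').symm
      _ ≤ ∑ i, (ν i + a i * w i)^2 := hmax _ hvsum
  have hkey : (ν z + a z * x')^2 + (ν j + a j * y')^2
      ≤ (ν z + a z * (w z))^2 + (ν j + a j * (w j))^2 := by linarith only [hle]
  -- assemble the contradiction
  have hE : (ν z + a z * x')^2 + (ν j + a j * y')^2
      = ((ν z + a z * w z)^2 + (ν j + a j * w j)^2)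
        + ((a z)^2 * (p^2 - X^2) + 2 * a z * (ν z * (x' - w z))
          + (a j)^2 * (X^2 - p^2) + 2 * a j * (ν j * y' - ν j * w j)) := by
    linear_combination (a z)^2 * hx'2 + (a j)^2 * hy'2 + (a j)^2 * hq2
      + ((a j)^2 - (a z)^2) * hwz2
  have m1 : 2 * a z * (-(c₀ * (X - p))) ≤ 2 * a z * (ν z * (x' - w z)) :=
    mul_le_mul_of_nonneg_left hb (by positivity)
  have piece4 : 0 ≤ 2 * a j * (ν j * y' - ν j * w j) :=
    mul_nonneg (by positivity) (sub_nonneg.mpr hc2)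
  have h7 : (a z)^2 * (p^2 - X^2) + 2 * a z * (-(c₀ * (X - p)))
        + (a j)^2 * (X^2 - p^2) + 0
      ≤ (a z)^2 * (p^2 - X^2) + 2 * a z * (ν z * (x' - w z))
        + (a j)^2 * (X^2 - p^2) + 2 * a j * (ν j * y' - ν j * w j) :=
    add_le_add (add_le_add (add_le_add le_rfl m1) le_rfl) piece4
  have h8 : (X - p) * (((a j)^2 - (a z)^2) * (X + p) - 2 * a z * c₀)
      = (a z)^2 * (p^2 - X^2) + 2 * a z * (-(c₀ * (X - p))) + (a j)^2 * (X^2 - p^2) + 0 := by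
    ring
  have h6 : 0 < (a z)^2 * (p^2 - X^2) + 2 * a z * (ν z * (x' - w z))
      + (a j)^2 * (X^2 - p^2) + 2 * a j * (ν j * y' - ν j * w j) :=
    lt_of_lt_of_le (h8 ▸ hprod) h7
  have hlt : (ν z + a z * w z)^2 + (ν j + a j * w j)^2
      < (ν z + a z * x')^2 + (ν j + a j * y')^2 := by
    rw [hE]
    exact lt_add_of_pos_right _ h6
  exact absurd hkey (not_le.mpr hlt)

lemma canon_lb {d : ℕ} (a : Fin d → ℝ) (ha : ∀ i, 0 < a i) (z j : Fin d)
    (hzj : a z < a j) (hjmax : ∀ i, a i ≤ a j) (c₀ : ℝ) (hc₀ : 0 < c₀)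
    (wt : Fin d → ℝ) (hwt : ∑ i, (wt i)^2 = c₀^2)
    (hmaxt : ∀ v : Fin d → ℝ, (∑ i, (v i)^2 = c₀^2) →
      ∑ i, ((if i = z then c₀ else 0) + a i * v i)^2
        ≤ ∑ i, ((if i = z then c₀ else 0) + a i * wt i)^2) :
    min (a z * c₀ / ((a j)^2 - (a z)^2)) c₀ ≤ wt z := by
  have haz := ha z
  have haj := ha j
  have hne : z ≠ j := by rintro rfl; exact lt_irrefl _ hzj
  have hD : 0 < (a j)^2 - (a z)^2 := by nlinarith only [haz, haj, hzj]
  set T := a z * c₀ / ((a j)^2 - (a z)^2) with hTdef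
  have hT : ((a j)^2 - (a z)^2) * T = a z * c₀ := by rw [hTdef]; field_simp
  have hTpos : 0 < T := div_pos (mul_pos haz hc₀) hD
  set m := min T c₀ with hm
  have hm0 : 0 < m := lt_min hTpos hc₀
  have hmc : m ≤ c₀ := min_le_right _ _
  have hmT : m ≤ T := min_le_left _ _
  have hm2 : m^2 ≤ c₀^2 := by nlinarith only [hm0, hmc]
  set u := Real.sqrt (c₀^2 - m^2) with hu
  have hu2 : u^2 = c₀^2 - m^2 := Real.sq_sqrt (by linarith only [hm2])
  -- the test vector
  have hvsum : ∑ i, ((Function.update (Function.update (fun _ : Fin d => (0:ℝ)) z m) j u) i)^2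
      = c₀^2 := by
    calc ∑ i, ((Function.update (Function.update (fun _ : Fin d => (0:ℝ)) z m) j u) i)^2
        = (∑ _i : Fin d, (0:ℝ)^2) - (0:ℝ)^2 - (0:ℝ)^2 + m^2 + u^2 :=
          sum_upd2 (fun _ t => t^2) (fun _ => 0) hne m u
      _ = c₀^2 := by simp [hu2]
  have hle := hmaxt _ hvsum
  have hlhs : ∑ i, ((if i = z then c₀ else 0)
        + a i * ((Function.update (Function.update (fun _ : Fin d => (0:ℝ)) z m) j u) i))^2
      = (∑ i, ((if i = z then c₀ else 0) + a i * 0)^2)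
        - ((if z = z then c₀ else 0) + a z * 0)^2 - ((if j = z then c₀ else 0) + a j * 0)^2
        + ((if z = z then c₀ else 0) + a z * m)^2 + ((if j = z then c₀ else 0) + a j * u)^2 :=
    sum_upd2 (fun i t => ((if i = z then c₀ else 0) + a i * t)^2) (fun _ => 0) hne m u
  have hbase : ∑ i, ((if i = z then c₀ else 0) + a i * 0)^2 = c₀^2 := by
    have : ∀ i : Fin d, ((if i = z then c₀ else 0) + a i * 0)^2
        = (if i = z then c₀^2 else 0) := by
      intro i
      by_cases h : i = z <;> simp [h]
    rw [Finset.sum_congr rfl (fun i _ => this i), Finset.sum_ite_eq' Finset.univ z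
      (fun _ => c₀^2)]
    simp
  have hlhs2 : ∑ i, ((if i = z then c₀ else 0)
        + a i * ((Function.update (Function.update (fun _ : Fin d => (0:ℝ)) z m) j u) i))^2
      = (c₀ + a z * m)^2 + (a j)^2 * u^2 := by
    rw [hlhs, hbase, if_pos rfl, if_neg hne.symm]
    ring
  -- upper bound for the value at wt
  have hsplit : ∑ i, ((if i = z then c₀ else 0) + a i * wt i)^2
      = (c₀ + a z * wt z)^2
        + ∑ i ∈ Finset.univ.erase z, ((if i = z then c₀ else 0) + a i * wt i)^2 := by
    rw [← Finset.add_sum_erase Finset.univ _ (Finset.mem_univ z), if_pos rfl]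
  have hsplitw : ∑ i, (wt i)^2
      = (wt z)^2 + ∑ i ∈ Finset.univ.erase z, (wt i)^2 :=
    (Finset.add_sum_erase Finset.univ (fun i => (wt i)^2) (Finset.mem_univ z)).symm
  have hterm : ∀ i ∈ Finset.univ.erase z,
      ((if i = z then c₀ else 0) + a i * wt i)^2 ≤ (a j)^2 * (wt i)^2 := by
    intro i hi
    have hiz : i ≠ z := Finset.ne_of_mem_erase hi
    rw [if_neg hiz, zero_add, mul_pow]
    have h1 : (a i)^2 ≤ (a j)^2 := by nlinarith only [ha i, hjmax i]
    exact mul_le_mul_of_nonneg_right h1 (sq_nonneg _)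
  have hub : ∑ i, ((if i = z then c₀ else 0) + a i * wt i)^2
      ≤ (c₀ + a z * wt z)^2 + (a j)^2 * (c₀^2 - (wt z)^2) := by
    rw [hsplit]
    have h2 : ∑ i ∈ Finset.univ.erase z, ((if i = z then c₀ else 0) + a i * wt i)^2
        ≤ ∑ i ∈ Finset.univ.erase z, (a j)^2 * (wt i)^2 := Finset.sum_le_sum hterm
    have h3 : ∑ i ∈ Finset.univ.erase z, (a j)^2 * (wt i)^2
        = (a j)^2 * (c₀^2 - (wt z)^2) := by
      rw [← Finset.mul_sum]
      have h4 : ∑ i ∈ Finset.univ.erase z, (wt i)^2 = c₀^2 - (wt z)^2 := by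
        linarith only [hsplitw, hwt]
      rw [h4]
    linarith only [h2, h3]
  -- combine
  have hF : (c₀ + a z * m)^2 + (a j)^2 * (c₀^2 - m^2)
      ≤ (c₀ + a z * wt z)^2 + (a j)^2 * (c₀^2 - (wt z)^2) := by
    have h5 : (c₀ + a z * m)^2 + (a j)^2 * u^2
        ≤ ∑ i, ((if i = z then c₀ else 0) + a i * wt i)^2 := by
      rw [← hlhs2]; exact hle
    rw [hu2] at h5
    linarith only [h5, hub]
  have hwz2 : (wt z)^2 ≤ c₀^2 := by
    rw [← hwt]
    exact Finset.single_le_sum (f := fun i => (wt i)^2) (fun i _ => sq_nonneg _)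
      (Finset.mem_univ z)
  -- conclude m ≤ wt z
  by_contra hcon
  push_neg at hcon
  -- F(m) - F(wt z) = (m - wt z) * (2 a z c₀ - (a j² - a z²)(m + wt z)) > 0
  have hsum2T : m + wt z < 2 * T := by linarith only [hcon, hmT]
  have h11 : ((a j)^2 - (a z)^2) * (m + wt z) < 2 * (a z * c₀) := by
    calc ((a j)^2 - (a z)^2) * (m + wt z) < ((a j)^2 - (a z)^2) * (2 * T) :=
          mul_lt_mul_of_pos_left hsum2T hD
      _ = 2 * (a z * c₀) := by linear_combination 2 * hT
  have h12 : 0 < (m - wt z) * (2 * (a z * c₀) - ((a j)^2 - (a z)^2) * (m + wt z)) :=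
    mul_pos (by linarith only [hcon]) (by linarith only [h11])
  have h13 : (c₀ + a z * wt z)^2 + (a j)^2 * (c₀^2 - (wt z)^2)
      < (c₀ + a z * m)^2 + (a j)^2 * (c₀^2 - m^2) := by nlinarith only [h12]
  exact absurd hF (not_le.mpr h13)

lemma canon_eq {d : ℕ} (a : Fin d → ℝ) (z : Fin d) (haz : 0 < a z)
    (heq : ∀ i, a i = a z) (c₀ : ℝ) (hc₀ : 0 < c₀)
    (wt : Fin d → ℝ) (hwt : ∑ i, (wt i)^2 = c₀^2)
    (hmaxt : ∀ v : Fin d → ℝ, (∑ i, (v i)^2 = c₀^2) →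
      ∑ i, ((if i = z then c₀ else 0) + a i * v i)^2
        ≤ ∑ i, ((if i = z then c₀ else 0) + a i * wt i)^2) :
    c₀ ≤ wt z := by
  have hvsum : ∑ i, ((fun i => if i = z then c₀ else 0) i)^2 = c₀^2 := by
    have h1 : ∀ i : Fin d, ((if i = z then c₀ else 0) : ℝ)^2 = (if i = z then c₀^2 else 0) := by
      intro i; by_cases h : i = z <;> simp [h]
    rw [show (∑ i, ((fun i => if i = z then c₀ else 0) i)^2 : ℝ)
        = ∑ i, ((if i = z then c₀^2 else 0) : ℝ) from
      Finset.sum_congr rfl (fun i _ => h1 i)]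
    rw [Finset.sum_ite_eq' Finset.univ z (fun _ => c₀^2)]
    simp
  have hle := hmaxt _ hvsum
  have hlhs : ∑ i, ((if i = z then c₀ else 0)
      + a i * ((fun i => if i = z then c₀ else 0) i))^2 = (c₀ + a z * c₀)^2 := by
    have h1 : ∀ i : Fin d, ((if i = z then c₀ else 0)
        + a i * ((fun i => if i = z then c₀ else 0) i))^2
        = (if i = z then (c₀ + a z * c₀)^2 else 0) := by
      intro i
      by_cases h : i = z
      · simp [h]
      · simp [h]
    rw [Finset.sum_congr rfl (fun i _ => h1 i),
      Finset.sum_ite_eq' Finset.univ z (fun _ => (c₀ + a z * c₀)^2)]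
    simp
  have hrhs : ∑ i, ((if i = z then c₀ else 0) + a i * wt i)^2
      = c₀^2 + 2 * a z * c₀ * wt z + (a z)^2 * c₀^2 := by
    have h1 : ∀ i : Fin d, ((if i = z then c₀ else 0) + a i * wt i)^2
        = (a z)^2 * (wt i)^2 + (if i = z then c₀^2 + 2 * a z * c₀ * wt z else 0) := by
      intro i
      by_cases h : i = z
      · subst h; rw [heq i, if_pos rfl, if_pos rfl]; ring
      · rw [heq i, if_neg h, if_neg h]; ring
    rw [Finset.sum_congr rfl (fun i _ => h1 i), Finset.sum_add_distrib,
      Finset.sum_ite_eq' Finset.univ z (fun _ => c₀^2 + 2 * a z * c₀ * wt z),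
      ← Finset.mul_sum, hwt]
    simp
    ring
  rw [hlhs, hrhs] at hle
  have h2 : 2 * a z * c₀ * c₀ ≤ 2 * a z * c₀ * wt z := by nlinarith only [hle]
  have h3 : 0 < 2 * a z * c₀ := by positivity
  exact le_of_mul_le_mul_left h2 h3

lemma vnorm_eq {d : ℕ} (x : Fin d → ℝ) : vnorm x = Real.sqrt (∑ i, (x i)^2) := by
  rw [vnorm, dotProduct]
  congr 1
  exact Finset.sum_congr rfl (fun i _ => (sq (x i)).symm)

lemma sum_sq_of_vnorm {d : ℕ} {x : Fin d → ℝ} {c : ℝ} (hc : 0 ≤ c) (h : vnorm x = c) :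
    ∑ i, (x i)^2 = c^2 := by
  have h0 : 0 ≤ ∑ i, (x i)^2 := Finset.sum_nonneg fun i _ => sq_nonneg _
  have h1 := congrArg (fun t : ℝ => t^2) h
  simp only [vnorm_eq] at h1
  rwa [Real.sq_sqrt h0] at h1

lemma vnorm_of_sum_sq {d : ℕ} {x : Fin d → ℝ} {c : ℝ} (hc : 0 ≤ c)
    (h : ∑ i, (x i)^2 = c^2) : vnorm x = c := by
  rw [vnorm_eq, h, Real.sqrt_sq hc]

lemma gObj_eq {d : ℕ} (β : ℝ) (ν lam w : Fin d → ℝ) :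
    gObj β ν lam w = ∑ i, (ν i + (β / Real.sqrt (lam i)) * w i)^2 := by
  unfold gObj
  exact Finset.sum_congr rfl (fun i _ => by rw [div_mul_eq_mul_div])


/-- **Lemma (comparison with the canonical optimization problem).**
Let `w⋆` maximize `w ↦ Σ_i (ν_i + β w_i/√λ_i)²` over the sphere of radius `c₀`, and
let `w̃⋆` maximize the canonical objective (with signal `c₀ e₁`) over the same sphere.
Then `|w⋆₁| ≤ |w̃⋆₁|`. -/
theorem first_coordinate_comparison
    (d : ℕ) (hd : 1 ≤ d) (β : ℝ) (hβ : 0 < β) (c₀ : ℝ) (hc₀ : 0 < c₀)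
    (lam : Fin d → ℝ) (hlam : ∀ i, 0 < lam i)
    (hlam1 : ∀ i, lam i ≤ lam ⟨0, by omega⟩)
    (ν : Fin d → ℝ) (hν : vnorm ν = c₀)
    (wstar : Fin d → ℝ) (hwstar : vnorm wstar = c₀)
    (hmax : ∀ w : Fin d → ℝ, vnorm w = c₀ → gObj β ν lam w ≤ gObj β ν lam wstar)
    (wtil : Fin d → ℝ) (hwtil : vnorm wtil = c₀)
    (hmaxtil : ∀ w : Fin d → ℝ, vnorm w = c₀ →
      gObj β (fun i => if i = ⟨0, by omega⟩ then c₀ else 0) lam w ≤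
        gObj β (fun i => if i = ⟨0, by omega⟩ then c₀ else 0) lam wtil) :
    |wstar ⟨0, by omega⟩| ≤ |wtil ⟨0, by omega⟩| := by
  have hzlt : 0 < d := hd
  set z : Fin d := ⟨0, hzlt⟩ with hzdef
  set a : Fin d → ℝ := fun i => β / Real.sqrt (lam i) with ha_def
  have ha : ∀ i, 0 < a i := fun i => div_pos hβ (Real.sqrt_pos.mpr (hlam i))
  have hamin : ∀ i, a z ≤ a i := by
    intro i
    apply div_le_div_of_nonneg_left hβ.le (Real.sqrt_pos.mpr (hlam i))
    exact Real.sqrt_le_sqrt (hlam1 i)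
  have hνs : ∑ i, (ν i)^2 = c₀^2 := sum_sq_of_vnorm hc₀.le hν
  have hws : ∑ i, (wstar i)^2 = c₀^2 := sum_sq_of_vnorm hc₀.le hwstar
  have hts : ∑ i, (wtil i)^2 = c₀^2 := sum_sq_of_vnorm hc₀.le hwtil
  have hmax' : ∀ v : Fin d → ℝ, (∑ i, (v i)^2 = c₀^2) →
      ∑ i, (ν i + a i * v i)^2 ≤ ∑ i, (ν i + a i * wstar i)^2 := by
    intro v hv
    have h := hmax v (vnorm_of_sum_sq hc₀.le hv)
    rw [gObj_eq, gObj_eq] at h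
    exact h
  have hmaxt' : ∀ v : Fin d → ℝ, (∑ i, (v i)^2 = c₀^2) →
      ∑ i, ((if i = z then c₀ else 0) + a i * v i)^2
        ≤ ∑ i, ((if i = z then c₀ else 0) + a i * wtil i)^2 := by
    intro v hv
    have h := hmaxtil v (vnorm_of_sum_sq hc₀.le hv)
    rw [gObj_eq, gObj_eq] at h
    exact h
  obtain ⟨j, -, hjmax⟩ := Finset.exists_max_image (Finset.univ : Finset (Fin d)) a
    ⟨z, Finset.mem_univ z⟩
  have hjmax' : ∀ i, a i ≤ a j := fun i => hjmax i (Finset.mem_univ i)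
  have habs : |wstar z| ≤ c₀ := by
    refine abs_le_of_sq_le' hc₀.le ?_
    rw [← hws]
    exact Finset.single_le_sum (f := fun i => (wstar i)^2) (fun i _ => sq_nonneg _)
      (Finset.mem_univ z)
  rcases eq_or_lt_of_le (hamin j) with hEq | hLt
  · have heq : ∀ i, a i = a z := fun i => le_antisymm (hEq ▸ hjmax' i) (hamin i)
    have h1 := canon_eq a z (ha z) heq c₀ hc₀ wtil hts hmaxt'
    calc |wstar z| ≤ c₀ := habs
      _ ≤ wtil z := h1
      _ ≤ |wtil z| := le_abs_self _
  · have hub := gen_ub a ha z j hLt c₀ hc₀ ν hνs wstar hws hmax'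
    have hlb := canon_lb a ha z j hLt hjmax' c₀ hc₀ wtil hts hmaxt'
    have hD : 0 < (a j)^2 - (a z)^2 := by nlinarith only [ha z, ha j, hLt]
    have h1 : |wstar z| ≤ a z * c₀ / ((a j)^2 - (a z)^2) := by
      rw [le_div_iff₀ hD]
      linarith only [hub]
    calc |wstar z| ≤ min (a z * c₀ / ((a j)^2 - (a z)^2)) c₀ := le_min h1 habs
      _ ≤ wtil z := hlb
      _ ≤ |wtil z| := le_abs_self _


end
end
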